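/- For all real a, b, x: the derivative in x of e^{-bx}(a sin(ax) - b cos(ax)) / (a² + b²) equals e^{-bx} cos(ax), provided a² + b² ≠ 0. Consequently, |∫_1^T e^{-εv} cos(v) dv / v| is bounded by an absolute constant, uniformly over all ε ≥ 0 and T ≥ 1. -/

import Mathlib

/-- The function `x ↦ e^{-bx}(a sin(ax) - b cos(ax))/(a² + b²)` is an antiderivative of
`x ↦ e^{-bx} cos(ax)` (for `a² + b² ≠ 0`); consequently `|∫_1^T e^{-εv} cos v dv / v|`
is bounded by an absolute constant, uniformly over `ε ≥ 0` and `T ≥ 1`. -/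
theorem exp_cos_antideriv_and_uniform_bound :
    (∀ a b x : ℝ, a ^ 2 + b ^ 2 ≠ 0 →
      HasDerivAt (fun x : ℝ =>
          Real.exp (-b * x) * (a * Real.sin (a * x) - b * Real.cos (a * x)) /
            (a ^ 2 + b ^ 2))
        (Real.exp (-b * x) * Real.cos (a * x)) x) ∧
    (∃ C : ℝ, 0 < C ∧ ∀ ε T : ℝ, 0 ≤ ε → 1 ≤ T →
      |∫ v in (1 : ℝ)..T, Real.exp (-ε * v) * Real.cos v / v| ≤ C) := by
  have part1 : ∀ a b x : ℝ, a ^ 2 + b ^ 2 ≠ 0 →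
      HasDerivAt (fun x : ℝ =>
          Real.exp (-b * x) * (a * Real.sin (a * x) - b * Real.cos (a * x)) /
            (a ^ 2 + b ^ 2))
        (Real.exp (-b * x) * Real.cos (a * x)) x := by
    intro a b x hab
    have hlin : ∀ c : ℝ, HasDerivAt (fun x : ℝ => c * x) c x := by
      intro c
      simpa using (hasDerivAt_id x).const_mul c
    have hexp : HasDerivAt (fun x : ℝ => Real.exp (-b * x))
        (Real.exp (-b * x) * (-b)) x := (hlin (-b)).exp
    have hsin : HasDerivAt (fun x : ℝ => Real.sin (a * x)) (Real.cos (a * x) * a) x :=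
      (Real.hasDerivAt_sin (a * x)).comp x (hlin a)
    have hcos : HasDerivAt (fun x : ℝ => Real.cos (a * x)) (-Real.sin (a * x) * a) x :=
      (Real.hasDerivAt_cos (a * x)).comp x (hlin a)
    have h2 : HasDerivAt (fun x : ℝ => a * Real.sin (a * x) - b * Real.cos (a * x))
        (a * (Real.cos (a * x) * a) - b * (-Real.sin (a * x) * a)) x :=
      (hsin.const_mul a).sub (hcos.const_mul b)
    have h3 := (hexp.mul h2).div_const (a ^ 2 + b ^ 2)
    refine h3.congr_deriv ?_
    field_simp
    ring
  refine ⟨part1, 6, by norm_num, ?_⟩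
  intro ε T hε hT
  set F : ℝ → ℝ := fun v =>
      Real.exp (-(ε * v)) * (Real.sin v - ε * Real.cos v) / (1 + ε ^ 2)
    with hFdef
  have hne : (1 : ℝ) ^ 2 + ε ^ 2 ≠ 0 := by positivity
  have hF : ∀ v : ℝ, HasDerivAt F (Real.exp (-ε * v) * Real.cos v) v := by
    intro v
    have h := part1 1 ε v hne
    rw [neg_mul] at h ⊢
    simpa using h
  -- bound on F
  have hFb : ∀ v : ℝ, 0 ≤ v → |F v| ≤ 2 := by
    intro v hv
    have h1 : Real.exp (-ε * v) ≤ 1 := by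
      apply Real.exp_le_one_iff.2
      nlinarith
    have h2 : |Real.sin v - ε * Real.cos v| ≤ 1 + ε := by
      have hs := Real.abs_sin_le_one v
      have hc := Real.abs_cos_le_one v
      calc |Real.sin v - ε * Real.cos v|
          ≤ |Real.sin v| + |ε * Real.cos v| := abs_sub _ _
        _ ≤ 1 + ε := by
            rw [abs_mul, abs_of_nonneg hε]
            nlinarith [abs_nonneg (Real.sin v), abs_nonneg (Real.cos v)]
    rw [hFdef]
    simp only [abs_div, abs_mul]
    rw [abs_of_pos (by positivity : (0:ℝ) < 1 + ε ^ 2)]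
    rw [div_le_iff₀ (by positivity)]
    have h1' : Real.exp (-(ε * v)) ≤ 1 := by rwa [neg_mul] at h1
    have he : |Real.exp (-(ε * v))| = Real.exp (-(ε * v)) := abs_of_pos (Real.exp_pos _)
    rw [he]
    nlinarith [abs_nonneg (Real.sin v - ε * Real.cos v),
      Real.exp_pos (-(ε * v)), mul_le_mul h1' h2 (abs_nonneg _) (by norm_num : (0:ℝ) ≤ 1)]
  -- integration by parts
  have hu : ∀ x ∈ Set.uIcc (1 : ℝ) T, HasDerivAt (fun x : ℝ => x⁻¹) (-(x ^ 2)⁻¹) x := by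
    intro x hx
    rw [Set.uIcc_of_le hT] at hx
    exact hasDerivAt_inv (by linarith [hx.1])
  have hvder : ∀ x ∈ Set.uIcc (1 : ℝ) T, HasDerivAt F (Real.exp (-ε * x) * Real.cos x) x :=
    fun x _ => hF x
  have hcontu' : ContinuousOn (fun x : ℝ => -(x ^ 2)⁻¹) (Set.uIcc (1 : ℝ) T) := by
    apply ContinuousOn.neg
    apply ContinuousOn.inv₀ (by fun_prop)
    intro x hx
    rw [Set.uIcc_of_le hT] at hx
    nlinarith [hx.1]
  have hu'int : IntervalIntegrable (fun x : ℝ => -(x ^ 2)⁻¹) MeasureTheory.volume 1 T :=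
    hcontu'.intervalIntegrable
  have hv'int : IntervalIntegrable (fun x : ℝ => Real.exp (-ε * x) * Real.cos x)
      MeasureTheory.volume 1 T := (Continuous.intervalIntegrable (by fun_prop) _ _)
  have hibp := intervalIntegral.integral_mul_deriv_eq_deriv_mul hu hvder hu'int hv'int
  have heq : (∫ v in (1 : ℝ)..T, Real.exp (-ε * v) * Real.cos v / v)
      = ∫ x in (1 : ℝ)..T, x⁻¹ * (Real.exp (-ε * x) * Real.cos x) := by
    apply intervalIntegral.integral_congr
    intro x _
    exact div_eq_inv_mul _ _
  rw [heq, hibp]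
  -- bound the remaining integral
  have hFcont : ContinuousOn F (Set.uIcc (1 : ℝ) T) := by
    intro x hx
    exact (hF x).continuousAt.continuousWithinAt
  have hint1 : IntervalIntegrable (fun x : ℝ => |(-(x ^ 2)⁻¹) * F x|)
      MeasureTheory.volume 1 T := ((hcontu'.mul hFcont).abs).intervalIntegrable
  have hint2 : IntervalIntegrable (fun x : ℝ => 2 * (x ^ 2)⁻¹) MeasureTheory.volume 1 T := by
    apply ContinuousOn.intervalIntegrable
    apply ContinuousOn.mul continuousOn_const
    apply ContinuousOn.inv₀ (by fun_prop)
    intro x hx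
    rw [Set.uIcc_of_le hT] at hx
    nlinarith [hx.1]
  have hmono : ∀ x ∈ Set.Icc (1 : ℝ) T, |(-(x ^ 2)⁻¹) * F x| ≤ 2 * (x ^ 2)⁻¹ := by
    intro x hx
    have hx1 : (1 : ℝ) ≤ x := hx.1
    have hx2 : (0 : ℝ) < x ^ 2 := by nlinarith
    rw [abs_mul, abs_neg, abs_inv, abs_of_pos hx2, mul_comm]
    apply mul_le_mul_of_nonneg_right (hFb x (by linarith)) (by positivity)
  have hcalc : (∫ x in (1 : ℝ)..T, 2 * (x ^ 2)⁻¹) = -2 * T⁻¹ - -2 * 1⁻¹ := by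
    apply intervalIntegral.integral_eq_sub_of_hasDerivAt
    · intro x hx
      rw [Set.uIcc_of_le hT] at hx
      have hx0 : x ≠ 0 := by intro h; rw [h] at hx; linarith [hx.1]
      have := (hasDerivAt_inv hx0).const_mul (-2 : ℝ)
      refine this.congr_deriv ?_
      ring
    · exact hint2
  have habs : |∫ x in (1 : ℝ)..T, (-(x ^ 2)⁻¹) * F x| ≤ 2 := by
    calc |∫ x in (1 : ℝ)..T, (-(x ^ 2)⁻¹) * F x|
        ≤ ∫ x in (1 : ℝ)..T, |(-(x ^ 2)⁻¹) * F x| :=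
          intervalIntegral.abs_integral_le_integral_abs hT
      _ ≤ ∫ x in (1 : ℝ)..T, 2 * (x ^ 2)⁻¹ :=
          intervalIntegral.integral_mono_on hT hint1 hint2 hmono
      _ = -2 * T⁻¹ - -2 * 1⁻¹ := hcalc
      _ ≤ 2 := by
          have : (0:ℝ) < T⁻¹ := by positivity
          nlinarith
  have hT0 : (0 : ℝ) < T := by linarith
  have hb1 : |T⁻¹ * F T| ≤ 2 := by
    rw [abs_mul, abs_inv, abs_of_pos hT0]
    calc T⁻¹ * |F T| ≤ 1 * 2 := by
          apply mul_le_mul _ (hFb T (by linarith)) (abs_nonneg _) (by norm_num)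
          rw [inv_le_one_iff₀]; right; linarith
      _ = 2 := by norm_num
  have hb2 : |(1 : ℝ)⁻¹ * F 1| ≤ 2 := by
    rw [inv_one, one_mul]; exact hFb 1 (by norm_num)
  calc |T⁻¹ * F T - 1⁻¹ * F 1 - ∫ x in (1:ℝ)..T, (-(x ^ 2)⁻¹) * F x|
      ≤ |T⁻¹ * F T - 1⁻¹ * F 1| + |∫ x in (1:ℝ)..T, (-(x ^ 2)⁻¹) * F x| := abs_sub _ _
    _ ≤ (|T⁻¹ * F T| + |(1:ℝ)⁻¹ * F 1|) + 2 := add_le_add (abs_sub _ _) habs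
    _ ≤ 6 := by linarith
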